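/- Let λ > 0, let j ≥ 1 be an integer, set λ_j = 2^j·λ, let k₀ ≥ 1 be an integer, and let r = (1 + 2^{-5})^{-1/2}. Let X₁, X₂ be independent Poisson(λ_j), X₃, X₄ independent Poisson(λ_j/2), all mutually independent, and set A(λ_j) = P(X₁ − X₂ ≥ 9). Then the two-sided tail satisfies P(|X₁ − X₂ + 8(X₃ − X₄)| ≥ ⌈8k₀/r⌉) ≤ P(|X₃ − X₄| ≥ k₀) + 2·A(λ_j)·(1 − P(|X₃ − X₄| ≥ k₀)). -/

import Mathlib

open MeasureTheory ProbabilityTheory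
open scoped NNReal ENNReal

/-- With `λ > 0`, `j ≥ 1`, `λ_j = 2^j λ`, `k₀ ≥ 1`,
`r = (1 + 2⁻⁵)^(-1/2)`, `X 0, X 1` independent Poisson(`λ_j`) and `X 2, X 3`
independent Poisson(`λ_j / 2`) (all mutually independent), and
`A(λ_j) = P(X 0 - X 1 ≥ 9)`, the two-sided tails satisfy
`P(|X 0 - X 1 + 8 (X 2 - X 3)| ≥ ⌈8 k₀ / r⌉) ≤
  P(|X 2 - X 3| ≥ k₀) + 2 A(λ_j) (1 - P(|X 2 - X 3| ≥ k₀))`. -/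
theorem stmt5_two_sided_pBH_bound
    {Ω : Type*} [MeasurableSpace Ω] (μ : Measure Ω) [IsProbabilityMeasure μ]
    (lam : ℝ≥0) (hlam : 0 < lam) (j : ℕ) (hj : 1 ≤ j) (lamj : ℝ≥0)
    (hlamj : lamj = 2 ^ j * lam)
    (k₀ : ℤ) (hk₀ : 1 ≤ k₀)
    (X : Fin 4 → Ω → ℕ) (hXmeas : ∀ i, Measurable (X i))
    (hindep : iIndepFun X μ)
    (hX0 : Measure.map (X 0) μ = poissonMeasure lamj)
    (hX1 : Measure.map (X 1) μ = poissonMeasure lamj)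
    (hX2 : Measure.map (X 2) μ = poissonMeasure (lamj / 2))
    (hX3 : Measure.map (X 3) μ = poissonMeasure (lamj / 2))
    (r : ℝ) (hr : r = (1 + 2 ^ (-5 : ℤ) : ℝ) ^ (-(1 / 2) : ℝ))
    (A : ℝ) (hA : A = (μ {ω | (9 : ℤ) ≤ (X 0 ω : ℤ) - (X 1 ω : ℤ)}).toReal) :
    (μ {ω | (⌈(8 * (k₀ : ℝ)) / r⌉ : ℤ) ≤
        |(X 0 ω : ℤ) - (X 1 ω : ℤ) + 8 * ((X 2 ω : ℤ) - (X 3 ω : ℤ))|}).toReal ≤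
      (μ {ω | k₀ ≤ |(X 2 ω : ℤ) - (X 3 ω : ℤ)|}).toReal +
        2 * A * (1 - (μ {ω | k₀ ≤ |(X 2 ω : ℤ) - (X 3 ω : ℤ)|}).toReal) := by
  -- notation
  set c : ℤ := ⌈(8 * (k₀ : ℝ)) / r⌉ with hc
  -- r ∈ (0,1)
  have hrpos : 0 < r := by
    rw [hr]; positivity
  have hrlt : r < 1 := by
    rw [hr]
    apply Real.rpow_lt_one_of_one_lt_of_neg
    · norm_num
    · norm_num
  -- ceiling bound : 8 k₀ + 1 ≤ c
  have hcb : 8 * k₀ + 1 ≤ c := by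
    have h1 : (8 * (k₀ : ℝ)) < (8 * (k₀ : ℝ)) / r := by
      rw [lt_div_iff₀ hrpos]
      have hk : (1 : ℝ) ≤ (k₀ : ℝ) := by exact_mod_cast hk₀
      nlinarith
    have : (8 * k₀ : ℤ) < c := by
      rw [hc, Int.lt_ceil]; push_cast; linarith
    omega
  -- pair maps
  set p01 : Ω → ℕ × ℕ := fun ω => (X 0 ω, X 1 ω) with hp01
  set p10 : Ω → ℕ × ℕ := fun ω => (X 1 ω, X 0 ω) with hp10
  set p23 : Ω → ℕ × ℕ := fun ω => (X 2 ω, X 3 ω) with hp23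
  have hm01 : Measurable p01 := (hXmeas 0).prodMk (hXmeas 1)
  have hm10 : Measurable p10 := (hXmeas 1).prodMk (hXmeas 0)
  have hm23 : Measurable p23 := (hXmeas 2).prodMk (hXmeas 3)
  have hms : ∀ s : Set (ℕ × ℕ), MeasurableSet s := fun s => s.to_countable.measurableSet
  -- sets
  set T : Set (ℕ × ℕ) := {p | (9 : ℤ) ≤ (p.1 : ℤ) - (p.2 : ℤ)} with hT
  set Sc : Set (ℕ × ℕ) := {p | ¬ k₀ ≤ |(p.1 : ℤ) - (p.2 : ℤ)|} with hS
  set S : Set Ω := {ω | k₀ ≤ |(X 2 ω : ℤ) - (X 3 ω : ℤ)|} with hSdef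
  have hSm : MeasurableSet S := by
    have : S = p23 ⁻¹' {p | k₀ ≤ |(p.1 : ℤ) - (p.2 : ℤ)|} := rfl
    rw [this]; exact hm23 (hms _)
  -- independence of the two pairs
  have hI : IndepFun p23 p01 μ :=
    hindep.indepFun_prodMk_prodMk hXmeas 2 3 0 1 (by decide) (by decide) (by decide) (by decide)
  have hmul := hI.measure_inter_preimage_eq_mul
  -- exchangeability of X0, X1
  have hI01 : IndepFun (X 0) (X 1) μ := hindep.indepFun (by decide)
  have hmap01 : μ.map p01 = (poissonMeasure lamj).prod (poissonMeasure lamj) := by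
    have h := (indepFun_iff_map_prod_eq_prod_map_map (hXmeas 0).aemeasurable
      (hXmeas 1).aemeasurable).mp hI01
    rw [hX0, hX1] at h; exact h
  have hmap10 : μ.map p10 = (poissonMeasure lamj).prod (poissonMeasure lamj) := by
    have h := (indepFun_iff_map_prod_eq_prod_map_map (hXmeas 1).aemeasurable
      (hXmeas 0).aemeasurable).mp hI01.symm
    rw [hX0, hX1] at h; exact h
  have hswap : μ (p10 ⁻¹' T) = μ (p01 ⁻¹' T) := by
    rw [← Measure.map_apply hm10 (hms T), ← Measure.map_apply hm01 (hms T), hmap10, hmap01]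
  -- pointwise inclusion
  have hincl : {ω | c ≤ |(X 0 ω : ℤ) - (X 1 ω : ℤ) + 8 * ((X 2 ω : ℤ) - (X 3 ω : ℤ))|}
      ⊆ S ∪ ((p23 ⁻¹' Sc ∩ p01 ⁻¹' T) ∪ (p23 ⁻¹' Sc ∩ p10 ⁻¹' T)) := by
    intro ω hω
    simp only [Set.mem_setOf_eq] at hω
    by_cases hS23 : k₀ ≤ |(X 2 ω : ℤ) - (X 3 ω : ℤ)|
    · exact Or.inl hS23
    · right
      set D : ℤ := (X 0 ω : ℤ) - (X 1 ω : ℤ) with hD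
      set H : ℤ := (X 2 ω : ℤ) - (X 3 ω : ℤ) with hH
      have hHb : |H| ≤ k₀ - 1 := by omega
      have htri : |D + 8 * H| ≤ |D| + 8 * |H| := by
        calc |D + 8 * H| ≤ |D| + |8 * H| := abs_add_le _ _
        _ = |D| + 8 * |H| := by rw [abs_mul]; norm_num
      have hDb : 9 ≤ |D| := by omega
      have hmem : ω ∈ p23 ⁻¹' Sc := hS23
      rcases abs_le'.mp (le_refl |D|) with _
      have : 9 ≤ D ∨ 9 ≤ -D := by
        rcases le_or_gt 0 D with h | h
        · left; rwa [abs_of_nonneg h] at hDb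
        · right; rw [abs_of_neg h] at hDb; omega
      rcases this with h | h
      · exact Or.inl ⟨hmem, by simpa [p01, T] using h⟩
      · exact Or.inr ⟨hmem, by simp only [Set.mem_preimage, p10, T, Set.mem_setOf_eq]; omega⟩
  -- measure bound in ℝ≥0∞
  have hbound : μ {ω | c ≤ |(X 0 ω : ℤ) - (X 1 ω : ℤ) + 8 * ((X 2 ω : ℤ) - (X 3 ω : ℤ))|}
      ≤ μ S + (μ (p23 ⁻¹' Sc) * μ (p01 ⁻¹' T) + μ (p23 ⁻¹' Sc) * μ (p10 ⁻¹' T)) := by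
    calc μ _ ≤ μ (S ∪ ((p23 ⁻¹' Sc ∩ p01 ⁻¹' T) ∪ (p23 ⁻¹' Sc ∩ p10 ⁻¹' T))) :=
          measure_mono hincl
      _ ≤ μ S + μ ((p23 ⁻¹' Sc ∩ p01 ⁻¹' T) ∪ (p23 ⁻¹' Sc ∩ p10 ⁻¹' T)) := measure_union_le _ _
      _ ≤ μ S + (μ (p23 ⁻¹' Sc ∩ p01 ⁻¹' T) + μ (p23 ⁻¹' Sc ∩ p10 ⁻¹' T)) := by
          gcongr; exact measure_union_le _ _
      _ = μ S + (μ (p23 ⁻¹' Sc) * μ (p01 ⁻¹' T) + μ (p23 ⁻¹' Sc) * μ (p10 ⁻¹' T)) := by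
          have e1 : μ (p23 ⁻¹' Sc ∩ p01 ⁻¹' T) = μ (p23 ⁻¹' Sc) * μ (p01 ⁻¹' T) :=
            hmul Sc T (hms _) (hms _)
          have e2 : μ (p23 ⁻¹' Sc ∩ p10 ⁻¹' T) = μ (p23 ⁻¹' Sc) * μ (p10 ⁻¹' T) := by
            have h : p10 ⁻¹' T = p01 ⁻¹' {p : ℕ × ℕ | (9:ℤ) ≤ (p.2:ℤ) - (p.1:ℤ)} := rfl
            rw [h, hmul Sc _ (hms _) (hms _)]
          rw [e1, e2]
  -- identify pieces
  have hcompl : p23 ⁻¹' Sc = Sᶜ := rfl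
  have hmuSc : μ (p23 ⁻¹' Sc) = 1 - μ S := by rw [hcompl, prob_compl_eq_one_sub hSm]
  have hA' : μ (p01 ⁻¹' T) = μ {ω | (9 : ℤ) ≤ (X 0 ω : ℤ) - (X 1 ω : ℤ)} := rfl
  -- pass to toReal
  have hfin : ∀ s : Set Ω, μ s ≠ ∞ := fun s => measure_ne_top μ s
  have hRHSne : μ S + (μ (p23 ⁻¹' Sc) * μ (p01 ⁻¹' T) + μ (p23 ⁻¹' Sc) * μ (p10 ⁻¹' T)) ≠ ∞ := by
    refine ENNReal.add_ne_top.mpr ⟨hfin _, ENNReal.add_ne_top.mpr ⟨?_, ?_⟩⟩ <;>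
      exact ENNReal.mul_ne_top (hfin _) (hfin _)
  have := ENNReal.toReal_mono hRHSne hbound
  rw [ENNReal.toReal_add (hfin _) (ENNReal.add_ne_top.mpr
    ⟨ENNReal.mul_ne_top (hfin _) (hfin _), ENNReal.mul_ne_top (hfin _) (hfin _)⟩),
    ENNReal.toReal_add (ENNReal.mul_ne_top (hfin _) (hfin _))
      (ENNReal.mul_ne_top (hfin _) (hfin _)),
    ENNReal.toReal_mul, ENNReal.toReal_mul] at this
  have hScr : (μ (p23 ⁻¹' Sc)).toReal = 1 - (μ S).toReal := by
    rw [hmuSc, ENNReal.toReal_sub_of_le prob_le_one ENNReal.one_ne_top, ENNReal.toReal_one]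
  rw [hswap, hA', ← hA, hScr] at this
  calc (μ _).toReal ≤ (μ S).toReal + ((1 - (μ S).toReal) * A + (1 - (μ S).toReal) * A) := this
    _ = (μ S).toReal + 2 * A * (1 - (μ S).toReal) := by ring
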